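/- Under conditions (2), (3), (4) and (5) on g, T₂,ₙ := ((n−1)/n)[E{g(X₁Y₁/(X̄Ȳ)) g(X₁Y₂/(X̄Ȳ))} − 2E{g(X₁Y₁/(X̄Ȳ)) g(X₁Y₂)} + E{g(X₁Y₁) g(X₁Y₂)}] → 0 as n → ∞. -/

import Mathlib

open MeasureTheory ProbabilityTheory Filter Real Topology
open scoped NNReal ENNReal

/-- expMeasure 1 as a withDensity with an NNReal density. -/
lemma expMeasure_one_eq_withDensity :
    expMeasure 1 = MeasureTheory.volume.withDensity
      (fun x => ((Real.toNNReal (if 0 ≤ x then Real.exp (-x) else 0) : ℝ≥0) : ℝ≥0∞)) := by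
  rw [expMeasure, gammaMeasure]
  congr 1
  funext x
  rw [gammaPDF_eq]
  rw [ENNReal.ofReal]
  congr 1
  by_cases h : 0 ≤ x
  · simp [h, Real.Gamma_one]
  · simp [h]

lemma measurable_expDensity :
    Measurable (fun x : ℝ => (Real.toNNReal (if 0 ≤ x then Real.exp (-x) else 0))) := by
  apply Measurable.real_toNNReal
  exact Measurable.ite measurableSet_Ici (measurable_id.neg.exp) measurable_const

lemma integral_expMeasure_one (f : ℝ → ℝ) :
    ∫ x, f x ∂(expMeasure 1) = ∫ x in Set.Ioi (0:ℝ), f x * Real.exp (-x) := by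
  rw [expMeasure_one_eq_withDensity,
    integral_withDensity_eq_integral_smul measurable_expDensity f]
  have : (fun x => (Real.toNNReal (if 0 ≤ x then Real.exp (-x) else 0)) • f x)
      = Set.indicator (Set.Ici (0:ℝ)) (fun x => f x * Real.exp (-x)) := by
    funext x
    by_cases h : 0 ≤ x
    · simp [h, Set.indicator_of_mem, NNReal.smul_def,
        Real.coe_toNNReal _ (Real.exp_nonneg _), mul_comm]
    · simp [h, Set.indicator_of_notMem, NNReal.smul_def]
  rw [this, integral_indicator measurableSet_Ici, integral_Ici_eq_integral_Ioi]

lemma integrable_expMeasure_one_iff (f : ℝ → ℝ) :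
    Integrable f (expMeasure 1) ↔
      IntegrableOn (fun x => f x * Real.exp (-x)) (Set.Ioi (0:ℝ)) := by
  rw [expMeasure_one_eq_withDensity,
    integrable_withDensity_iff_integrable_smul measurable_expDensity]
  have : (fun x => (Real.toNNReal (if 0 ≤ x then Real.exp (-x) else 0)) • f x)
      = Set.indicator (Set.Ici (0:ℝ)) (fun x => f x * Real.exp (-x)) := by
    funext x
    by_cases h : 0 ≤ x
    · simp [h, Set.indicator_of_mem, NNReal.smul_def,
        Real.coe_toNNReal _ (Real.exp_nonneg _), mul_comm]
    · simp [h, Set.indicator_of_notMem, NNReal.smul_def]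
  rw [this, integrable_indicator_iff measurableSet_Ici,
    integrableOn_Ici_iff_integrableOn_Ioi]


lemma integrableOn_pow_mul_exp (k : ℕ) :
    IntegrableOn (fun x : ℝ => x ^ k * Real.exp (-x)) (Set.Ioi (0:ℝ)) := by
  have h := Real.GammaIntegral_convergent (s := (k:ℝ) + 1) (by positivity)
  apply h.congr_fun ?_ measurableSet_Ioi
  intro x hx
  have hx' : (0:ℝ) < x := hx
  dsimp only
  rw [show (k:ℝ) + 1 - 1 = (k:ℝ) by ring, Real.rpow_natCast, mul_comm]

lemma integral_pow_mul_exp (k : ℕ) :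
    ∫ x in Set.Ioi (0:ℝ), x ^ k * Real.exp (-x) = (k.factorial : ℝ) := by
  have h := integral_rpow_mul_exp_neg_mul_Ioi (a := (k:ℝ) + 1) (r := 1) (by positivity) one_pos
  rw [show ((k:ℝ) + 1 - 1) = (k:ℝ) by ring] at h
  rw [show ∫ x in Set.Ioi (0:ℝ), x ^ k * Real.exp (-x)
      = ∫ x in Set.Ioi (0:ℝ), x ^ ((k:ℝ)) * Real.exp (-(1 * x)) by
    apply setIntegral_congr_fun measurableSet_Ioi
    intro x hx
    dsimp only
    rw [Real.rpow_natCast, one_mul], h]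
  simp [Real.Gamma_nat_eq_factorial]

lemma integrable_pow_expMeasure (k : ℕ) :
    Integrable (fun x : ℝ => x ^ k) (expMeasure 1) :=
  (integrable_expMeasure_one_iff _).2 (integrableOn_pow_mul_exp k)

lemma integral_pow_expMeasure (k : ℕ) :
    ∫ x, x ^ k ∂(expMeasure 1) = (k.factorial : ℝ) := by
  rw [integral_expMeasure_one, integral_pow_mul_exp]

lemma integral_id_expMeasure : ∫ x, x ∂(expMeasure 1) = 1 := by
  have h := integral_pow_expMeasure 1
  simpa using h

lemma integral_exp_mul_expMeasure {t : ℝ} (ht : t ≤ 0) :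
    ∫ x, Real.exp (t * x) ∂(expMeasure 1) = (1 - t)⁻¹ := by
  rw [integral_expMeasure_one]
  have hr : (0:ℝ) < 1 - t := by linarith
  have h := integral_rpow_mul_exp_neg_mul_Ioi (a := (1:ℝ)) (r := 1 - t) one_pos hr
  rw [show ∫ x in Set.Ioi (0:ℝ), Real.exp (t * x) * Real.exp (-x)
      = ∫ x in Set.Ioi (0:ℝ), x ^ ((1:ℝ) - 1) * Real.exp (-((1 - t) * x)) by
    apply setIntegral_congr_fun measurableSet_Ioi
    intro x hx
    dsimp only
    rw [sub_self, Real.rpow_zero, one_mul, ← Real.exp_add]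
    ring_nf, h]
  rw [Real.Gamma_one]
  rw [Real.rpow_one]
  field_simp

lemma expMeasure_Iic_zero : expMeasure 1 (Set.Iic (0:ℝ)) = 0 := by
  rw [expMeasure_one_eq_withDensity, withDensity_apply _ measurableSet_Iic]
  rw [setLIntegral_congr (Iio_ae_eq_Iic (a := (0:ℝ))).symm]
  rw [setLIntegral_congr_fun (g := fun _ => 0) measurableSet_Iio
    (fun x (hx : x < 0) => by
      simp [not_le.2 hx])]
  simp
lemma iIndepFun_precomp {Ω ι κ : Type*} [MeasurableSpace Ω] {μ : MeasureTheory.Measure Ω}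
    {f : κ → Ω → ℝ} (hf : iIndepFun f μ)
    {u : ι → κ} (hu : Function.Injective u) :
    iIndepFun (fun i => f (u i)) μ := by
  classical
  rw [iIndepFun_iff_measure_inter_preimage_eq_mul] at hf ⊢
  intro S sets hsets
  set e : ι ↪ κ := ⟨u, hu⟩ with he
  set sets' : κ → Set ℝ := fun j =>
    if h : ∃ i, i ∈ S ∧ u i = j then sets h.choose else Set.univ with hsets'
  have key : ∀ i ∈ S, sets' (u i) = sets i := by
    intro i hi
    have hex : ∃ i', i' ∈ S ∧ u i' = u i := ⟨i, hi, rfl⟩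
    have hch := hex.choose_spec
    rw [hsets']
    simp only [dif_pos hex]
    rw [hu hch.2]
  have h := hf (S.map e) (sets := sets') ?_
  · have hInter : (⋂ j ∈ S.map e, f j ⁻¹' sets' j)
        = ⋂ i ∈ S, (fun ω => f (u i) ω) ⁻¹' sets i := by
      ext ω
      simp only [Set.mem_iInter, Finset.mem_map, Function.Embedding.coeFn_mk, he,
        Set.mem_preimage]
      constructor
      · intro h i hi
        have := h (u i) ⟨i, hi, rfl⟩
        rwa [key i hi] at this
      · rintro h j ⟨i, hi, rfl⟩
        rw [key i hi]
        exact h i hi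
    have hProd : (∏ j ∈ S.map e, μ (f j ⁻¹' sets' j))
        = ∏ i ∈ S, μ ((fun ω => f (u i) ω) ⁻¹' sets i) := by
      rw [Finset.prod_map]
      apply Finset.prod_congr rfl
      intro i hi
      simp only [Function.Embedding.coeFn_mk, he]
      rw [key i hi]
    rw [← hInter, ← hProd]
    exact h
  · intro j hj
    rcases Finset.mem_map.1 hj with ⟨i, hi, rfl⟩
    simp only [Function.Embedding.coeFn_mk, he]
    rw [key i hi]
    exact hsets i hi
lemma growth_of_ratio (g : ℝ → ℝ) (h2 : ContinuousOn g (Set.Ici 0)) (ψ : ℝ → ℝ)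
    (hψ : ∀ t : ℝ, 1 < t → ∀ x : ℝ, 0 ≤ x → |g (t * x) / g t| < ψ x) :
    ∃ C : ℝ, 0 ≤ C ∧ ∃ m : ℕ, ∀ y : ℝ, 0 ≤ y → |g y| ≤ C * (1 + y) ^ m := by
  obtain ⟨M0, hM0⟩ := isCompact_Icc.exists_bound_of_continuousOn
    (h2.mono (fun x (hx : x ∈ Set.Icc (0:ℝ) 2) => hx.1))
  set M := max M0 0 with hMdef
  have hMnonneg : 0 ≤ M := le_max_right _ _
  have hM : ∀ y ∈ Set.Icc (0:ℝ) 2, |g y| ≤ M := fun y hy =>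
    le_trans (by simpa using hM0 y hy) (le_max_left _ _)
  have hstep : ∀ t : ℝ, 1 < t → g t ≠ 0 → |g (2 * t)| ≤ ψ 2 * |g t| := by
    intro t ht hgt
    have h := hψ t ht 2 (by norm_num)
    have hgt' : 0 < |g t| := abs_pos.2 hgt
    rw [abs_div] at h
    have := (div_lt_iff₀ hgt').1 h
    rw [mul_comm 2 t]
    linarith
  have hkill : ∀ z : ℝ, 1 < z → g z = 0 →
      (∀ ε : ℝ, 0 < ε → ∃ t, 1 < t ∧ g t ≠ 0 ∧ |t - z| < ε) → ∀ w, 0 ≤ w → g w = 0 := by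
    intro z hz hgz happ w hw
    choose t ht1 ht2 ht3 using fun n : ℕ => happ (1/(n+1)) (by positivity)
    have htz : Tendsto t atTop (𝓝 z) := by
      rw [tendsto_iff_dist_tendsto_zero]
      apply squeeze_zero (fun n => dist_nonneg) (fun n => ?_)
        tendsto_one_div_add_atTop_nhds_zero_nat
      rw [Real.dist_eq]
      exact (ht3 n).le
    set x := w / z with hxdef
    have hzpos : (0:ℝ) < z := by linarith
    have hx : 0 ≤ x := div_nonneg hw hzpos.le
    have hineq : ∀ n, |g (t n * x)| ≤ ψ x * |g (t n)| := by
      intro n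
      have h := hψ (t n) (ht1 n) x hx
      have hgt' : 0 < |g (t n)| := abs_pos.2 (ht2 n)
      rw [abs_div] at h
      have := (div_lt_iff₀ hgt').1 h
      linarith
    have hlim1 : Tendsto (fun n => |g (t n * x)|) atTop (𝓝 (|g w|)) := by
      have hmul : Tendsto (fun n => t n * x) atTop (𝓝 w) := by
        have h' := htz.mul_const x
        rw [show z * x = w by rw [hxdef]; field_simp [hzpos.ne']] at h'
        exact h'
      have hcw : ContinuousWithinAt g (Set.Ici 0) w := h2 w hw
      have : Tendsto (fun n => g (t n * x)) atTop (𝓝 (g w)) := by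
        apply hcw.tendsto.comp
        rw [tendsto_nhdsWithin_iff]
        exact ⟨hmul, Filter.Eventually.of_forall fun n =>
          mul_nonneg (le_trans zero_le_one (ht1 n).le) hx⟩
      exact this.abs
    have hlim2 : Tendsto (fun n => ψ x * |g (t n)|) atTop (𝓝 (ψ x * |g z|)) := by
      have hcz : ContinuousWithinAt g (Set.Ici 0) z := h2 z (le_trans zero_le_one hz.le)
      have : Tendsto (fun n => g (t n)) atTop (𝓝 (g z)) := by
        apply hcz.tendsto.comp
        rw [tendsto_nhdsWithin_iff]
        exact ⟨htz, Filter.Eventually.of_forall fun n =>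
          le_trans zero_le_one (ht1 n).le⟩
      exact this.abs.const_mul _
    have hfin : |g w| ≤ ψ x * |g z| := le_of_tendsto_of_tendsto' hlim1 hlim2 hineq
    rw [hgz] at hfin
    simp only [abs_zero, mul_zero] at hfin
    exact abs_eq_zero.1 (le_antisymm hfin (abs_nonneg _))
  by_cases hall : ∀ t : ℝ, 1 < t → g t ≠ 0
  · refine ⟨M, hMnonneg, ?_⟩
    set K := max (ψ 2) 1 with hKdef
    have hK1 : 1 ≤ K := le_max_right _ _
    obtain ⟨m, hm⟩ := pow_unbounded_of_one_lt K one_lt_two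
    refine ⟨m, ?_⟩
    have claim : ∀ k : ℕ, ∀ y : ℝ, 0 ≤ y → y ≤ 2^(k+1) → |g y| ≤ M * K ^ k := by
      intro k
      induction k with
      | zero => intro y hy hy2; simpa using hM y ⟨hy, by simpa using hy2⟩
      | succ k ih =>
        intro y hy hy2
        by_cases hcase : y ≤ 2^(k+1)
        · refine (ih y hy hcase).trans ?_
          apply mul_le_mul_of_nonneg_left _ hMnonneg
          exact pow_le_pow_right₀ hK1 (Nat.le_succ _)
        · push_neg at hcase
          have h2k : (2:ℝ) ≤ 2^(k+1) := by
            calc (2:ℝ) = 2^1 := (pow_one 2).symm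
            _ ≤ 2^(k+1) := pow_le_pow_right₀ one_le_two (by omega)
          have hy2' : (2:ℝ) < y := lt_of_le_of_lt h2k hcase
          have ht : 1 < y/2 := by linarith
          have hgt := hall _ ht
          have hst := hstep (y/2) ht hgt
          rw [show 2 * (y/2) = y by ring] at hst
          have hb := ih (y/2) (by linarith) (by
            rw [div_le_iff₀ (by norm_num : (0:ℝ) < 2)]
            calc y ≤ 2^(k+1+1) := hy2
            _ = 2^(k+1) * 2 := by ring)
          calc |g y| ≤ ψ 2 * |g (y/2)| := hst
          _ ≤ K * (M * K^k) := mul_le_mul (le_max_left _ _) hb (abs_nonneg _)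
              (by linarith)
          _ = M * K^(k+1) := by ring
    intro y hy
    have hex : ∃ k : ℕ, y ≤ 2^(k+1) := by
      obtain ⟨n, hn⟩ := pow_unbounded_of_one_lt y one_lt_two
      exact ⟨n, by
        calc y ≤ 2^n := hn.le
        _ ≤ 2^(n+1) := pow_le_pow_right₀ one_le_two (by omega)⟩
    have hk : y ≤ 2^(Nat.find hex + 1) := Nat.find_spec hex
    have hone : (1:ℝ) ≤ (1+y)^m := one_le_pow₀ (by linarith)
    have hKk : K ^ (Nat.find hex) ≤ (1+y)^m := by
      rcases Nat.eq_zero_or_pos (Nat.find hex) with h0 | hpos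
      · rw [h0]
        simpa using hone
      · have hklt := Nat.find_min hex (show Nat.find hex - 1 < Nat.find hex by omega)
        push_neg at hklt
        rw [show Nat.find hex - 1 + 1 = Nat.find hex by omega] at hklt
        calc K^(Nat.find hex) ≤ ((2:ℝ)^m)^(Nat.find hex) :=
              pow_le_pow_left₀ (le_trans zero_le_one hK1) hm.le _
        _ = ((2:ℝ)^(Nat.find hex))^m := by rw [← pow_mul, ← pow_mul, Nat.mul_comm]
        _ ≤ y^m := pow_le_pow_left₀ (by positivity) hklt.le m
        _ ≤ (1+y)^m := pow_le_pow_left₀ hy (by linarith) m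
    calc |g y| ≤ M * K^(Nat.find hex) := claim _ y hy hk
    _ ≤ M * (1+y)^m := mul_le_mul_of_nonneg_left hKk hMnonneg
  · push_neg at hall
    obtain ⟨b, hb1, hgb⟩ := hall
    by_cases hallz : ∀ t : ℝ, 1 < t → g t = 0
    · refine ⟨M, hMnonneg, 0, fun y hy => ?_⟩
      simp only [pow_zero, mul_one]
      by_cases h2y : y ≤ 2
      · exact hM y ⟨hy, h2y⟩
      · rw [hallz y (by linarith)]
        simpa using hMnonneg
    · push_neg at hallz
      obtain ⟨c, hc1, hgc⟩ := hallz
      exfalso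
      apply hgc
      rcases lt_or_gt_of_ne (show c ≠ b from fun h => hgc (h ▸ hgb)) with hcb | hbc
      · -- c < b : z = sInf of zeros in [c,b]
        set Sset := {t : ℝ | t ∈ Set.Icc c b ∧ g t = 0} with hSdef
        have hSne : Sset.Nonempty := ⟨b, ⟨⟨hcb.le, le_refl b⟩, hgb⟩⟩
        have hSbdd : BddBelow Sset := ⟨c, fun t ht => ht.1.1⟩
        have hclosed : IsClosed Sset := by
          have hSeq : Sset = Set.Icc c b ∩ g ⁻¹' {0} := by
            ext t
            simp [hSdef]
          rw [hSeq]
          exact (h2.mono (fun x (hx : x ∈ Set.Icc c b) => le_trans (by linarith) hx.1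
            : Set.Icc c b ⊆ Set.Ici 0)).preimage_isClosed_of_isClosed
            isClosed_Icc isClosed_singleton
        set z := sInf Sset with hzdef
        have hzmem : z ∈ Sset := hclosed.csInf_mem hSne hSbdd
        have hzc : c < z := lt_of_le_of_ne (le_csInf hSne (fun t ht => ht.1.1))
          (fun h => hgc (h ▸ hzmem.2))
        have h1z : 1 < z := lt_trans hc1 hzc
        apply hkill z h1z hzmem.2 ?_ c (by linarith)
        intro ε hε
        have hmaxlt : max c (z - ε/2) < z := max_lt hzc (by linarith)
        refine ⟨max c (z - ε/2), ?_, ?_, ?_⟩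
        · exact lt_of_lt_of_le hc1 (le_max_left _ _)
        · intro h0
          have hmem : max c (z - ε/2) ∈ Sset :=
            ⟨⟨le_max_left _ _, le_trans hmaxlt.le hzmem.1.2⟩, h0⟩
          exact absurd (csInf_le hSbdd hmem) (not_le.2 hmaxlt)
        · rw [abs_sub_lt_iff]
          constructor
          · linarith
          · have := le_max_right c (z - ε/2)
            linarith
      · -- b < c : z = sSup of zeros in [b,c]
        set Sset := {t : ℝ | t ∈ Set.Icc b c ∧ g t = 0} with hSdef
        have hSne : Sset.Nonempty := ⟨b, ⟨⟨le_refl b, hbc.le⟩, hgb⟩⟩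
        have hSbdd : BddAbove Sset := ⟨c, fun t ht => ht.1.2⟩
        have hclosed : IsClosed Sset := by
          have hSeq : Sset = Set.Icc b c ∩ g ⁻¹' {0} := by
            ext t
            simp [hSdef]
          rw [hSeq]
          exact (h2.mono (fun x (hx : x ∈ Set.Icc b c) => le_trans (by linarith) hx.1
            : Set.Icc b c ⊆ Set.Ici 0)).preimage_isClosed_of_isClosed
            isClosed_Icc isClosed_singleton
        set z := sSup Sset with hzdef
        have hzmem : z ∈ Sset := hclosed.csSup_mem hSne hSbdd
        have hzc : z < c := lt_of_le_of_ne (csSup_le hSne (fun t ht => ht.1.2))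
          (fun h => hgc (h ▸ hzmem.2))
        have h1z : 1 < z := lt_of_lt_of_le hb1 (le_csSup hSbdd ⟨⟨le_refl b, hbc.le⟩, hgb⟩)
        apply hkill z h1z hzmem.2 ?_ c (by linarith)
        intro ε hε
        have hminlt : z < min c (z + ε/2) := lt_min hzc (by linarith)
        refine ⟨min c (z + ε/2), ?_, ?_, ?_⟩
        · exact lt_trans h1z hminlt
        · intro h0
          have hmem : min c (z + ε/2) ∈ Sset :=
            ⟨⟨le_trans hzmem.1.1 hminlt.le, min_le_left _ _⟩, h0⟩
          exact absurd (le_csSup hSbdd hmem) (not_le.2 hminlt)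
        · rw [abs_sub_lt_iff]
          constructor
          · have := min_le_right c (z + ε/2)
            linarith
          · linarith
lemma tendsto_poly_mul_exp_neg (c : ℝ) (k : ℕ) (b : ℝ) (hb : 0 < b) :
    Tendsto (fun n : ℕ => c * (1 + (n:ℝ)^2)^k * Real.exp (-(b * n))) atTop (𝓝 0) := by
  have h1 : Tendsto (fun y : ℝ => y^(2*k) * Real.exp (-y)) atTop (𝓝 0) :=
    tendsto_pow_mul_exp_neg_atTop_nhds_zero _
  have h2 : Tendsto (fun x : ℝ => b * x) atTop atTop :=
    Tendsto.const_mul_atTop hb tendsto_id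
  have h3 := ((h1.comp h2).comp tendsto_natCast_atTop_atTop).const_mul
    (|c| * 2^k * (b⁻¹)^(2*k))
  rw [mul_zero] at h3
  have h3' : Tendsto (fun n : ℕ => |c| * 2^k * (b⁻¹)^(2*k) *
      ((b*(n:ℝ))^(2*k) * Real.exp (-(b*(n:ℝ))))) atTop (𝓝 0) := h3
  apply squeeze_zero_norm' ?_ h3'
  filter_upwards [eventually_ge_atTop 1] with n hn
  have hn1 : (1:ℝ) ≤ (n:ℝ) := by exact_mod_cast hn
  have hbnd : (1 + (n:ℝ)^2)^k ≤ 2^k * (n:ℝ)^(2*k) := by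
    calc (1 + (n:ℝ)^2)^k ≤ (2 * (n:ℝ)^2)^k := by
          apply pow_le_pow_left₀ (by positivity)
          nlinarith
    _ = 2^k * (n:ℝ)^(2*k) := by rw [mul_pow, ← pow_mul]
  have hexp : (0:ℝ) < Real.exp (-(b*(n:ℝ))) := Real.exp_pos _
  have hkey : (b⁻¹)^(2*k) * (b*(n:ℝ))^(2*k) = (n:ℝ)^(2*k) := by
    rw [← mul_pow]
    congr 1
    field_simp
  calc ‖c * (1 + (n:ℝ)^2)^k * Real.exp (-(b * (n:ℝ)))‖
      = |c| * (1 + (n:ℝ)^2)^k * Real.exp (-(b*(n:ℝ))) := by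
        rw [Real.norm_eq_abs, abs_mul, abs_mul, abs_of_pos hexp,
          abs_of_pos (by positivity : (0:ℝ) < (1 + (n:ℝ)^2)^k)]
    _ ≤ |c| * (2^k * (n:ℝ)^(2*k)) * Real.exp (-(b*(n:ℝ))) := by
        apply mul_le_mul_of_nonneg_right _ hexp.le
        exact mul_le_mul_of_nonneg_left hbnd (abs_nonneg c)
    _ = |c| * 2^k * (b⁻¹)^(2*k) * ((b*(n:ℝ))^(2*k) * Real.exp (-(b*(n:ℝ)))) := by
        rw [show |c| * 2^k * (b⁻¹)^(2*k) * ((b*(n:ℝ))^(2*k) * Real.exp (-(b*(n:ℝ))))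
            = |c| * 2^k * ((b⁻¹)^(2*k) * (b*(n:ℝ))^(2*k)) * Real.exp (-(b*(n:ℝ))) by ring,
          hkey]
        ring

lemma chernoff_exp_sample {Ω : Type*} [MeasureSpace Ω]
    [IsProbabilityMeasure (ℙ : Measure Ω)]
    (Z : ℕ → Ω → ℝ) (hm : ∀ i, Measurable (Z i))
    (hmap : ∀ i, Measure.map (Z i) ℙ = expMeasure 1)
    (hind : iIndepFun Z ℙ) (n : ℕ) :
    (ℙ {ω | ∑ i ∈ Finset.range n, Z i ω ≤ (n:ℝ) * Real.exp (-2)}).toReal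
      ≤ Real.exp (-(n:ℝ)) := by
  have hE2 : (1:ℝ) < Real.exp 2 := by
    have := Real.add_one_le_exp (2:ℝ)
    linarith
  set s : ℝ := Real.exp 2 - 1 with hs
  have hs0 : 0 < s := by simp only [hs]; linarith
  set t : ℝ := -s with htdef
  have ht : t ≤ 0 := by simp only [htdef]; linarith
  have hZnn : ∀ i, ∀ᵐ ω ∂(ℙ : Measure Ω), 0 ≤ Z i ω := by
    intro i
    rw [ae_iff]
    have hset : {ω | ¬ (0 ≤ Z i ω)} = Z i ⁻¹' (Set.Iio 0) := by
      ext ω; simp [not_le]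
    rw [hset, ← Measure.map_apply (hm i) measurableSet_Iio, hmap i]
    exact le_antisymm (le_trans (measure_mono Set.Iio_subset_Iic_self)
      (le_of_eq expMeasure_Iic_zero)) (by positivity)
  have hZsumnn : ∀ᵐ ω ∂(ℙ : Measure Ω), 0 ≤ ∑ i ∈ Finset.range n, Z i ω := by
    filter_upwards [ae_all_iff.2 hZnn] with ω hω
    exact Finset.sum_nonneg fun i _ => hω i
  have hmeas_sum : Measurable (fun ω => ∑ i ∈ Finset.range n, Z i ω) :=
    Finset.measurable_sum _ (fun i _ => hm i)
  have h_int : Integrable (fun ω => Real.exp (t * ∑ i ∈ Finset.range n, Z i ω)) ℙ := by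
    apply Integrable.mono' (integrable_const (1:ℝ))
      ((hmeas_sum.const_mul t).exp.aestronglyMeasurable)
    filter_upwards [hZsumnn] with ω hω
    rw [Real.norm_eq_abs, abs_of_pos (Real.exp_pos _)]
    rw [show (1:ℝ) = Real.exp 0 from Real.exp_zero.symm]
    apply Real.exp_le_exp.2
    have := mul_le_mul_of_nonneg_right ht hω
    simpa using this
  have hch := measure_le_le_exp_mul_mgf (μ := ℙ)
    (X := fun ω => ∑ i ∈ Finset.range n, Z i ω) ((n:ℝ) * Real.exp (-2)) ht h_int
  have hmgf : mgf (fun ω => ∑ i ∈ Finset.range n, Z i ω) ℙ t = (Real.exp (-2))^n := by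
    have hfun : (fun ω => ∑ i ∈ Finset.range n, Z i ω) = ∑ i ∈ Finset.range n, Z i := by
      funext ω; rw [Finset.sum_apply]
    rw [hfun, hind.mgf_sum hm]
    have hone : ∀ i, mgf (Z i) ℙ t = Real.exp (-2) := by
      intro i
      rw [mgf]
      have hmapint : ∫ ω, Real.exp (t * Z i ω) ∂ℙ = ∫ x, Real.exp (t * x) ∂(expMeasure 1) := by
        have hms : AEStronglyMeasurable (fun x : ℝ => Real.exp (t * x))
            (Measure.map (Z i) ℙ) := ((measurable_const_mul t).exp).aestronglyMeasurable
        rw [← hmap i, integral_map (hm i).aemeasurable hms]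
      rw [hmapint, integral_exp_mul_expMeasure ht]
      rw [show (1:ℝ) - t = Real.exp 2 by simp only [htdef, hs]; ring]
      rw [← Real.exp_neg]
    rw [Finset.prod_congr rfl (fun i _ => hone i), Finset.prod_const, Finset.card_range]
  rw [hmgf] at hch
  refine le_trans hch ?_
  rw [← Real.exp_nat_mul, ← Real.exp_add]
  apply Real.exp_le_exp.2
  have hE : Real.exp 2 * Real.exp (-2) = 1 := by
    rw [← Real.exp_add]; norm_num
  have hepos : (0:ℝ) < Real.exp (-2) := Real.exp_pos _
  have hn0 : (0:ℝ) ≤ (n:ℝ) := Nat.cast_nonneg n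
  simp only [htdef, hs, neg_neg]
  nlinarith [hE, hepos, hn0]
/-- The sample mean of the first `n` variables of the sequence `X`. -/
noncomputable def sampleMean {Ω : Type*} (X : ℕ → Ω → ℝ) (n : ℕ) (ω : Ω) : ℝ :=
  (∑ i ∈ Finset.range n, X i ω) / n

set_option maxHeartbeats 4000000

/-- `T₂,ₙ → 0` as `n → ∞`. -/
theorem lecam2d_T2
    {Ω : Type*} [MeasureSpace Ω] [IsProbabilityMeasure (ℙ : Measure Ω)]
    (X Y : ℕ → Ω → ℝ)
    (hmX : ∀ i, Measurable (X i)) (hmY : ∀ j, Measurable (Y j))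
    (hindep : iIndepFun (Sum.elim X Y) ℙ)
    (hX : ∀ i, Measure.map (X i) ℙ = expMeasure 1)
    (hY : ∀ j, Measure.map (Y j) ℙ = expMeasure 1)
    (g : ℝ → ℝ) (hgm : Measurable g)
    (h2 : ContinuousOn g (Set.Ici 0))
    (h3 : Integrable (fun ω => (g (X 0 ω * Y 0 ω)) ^ 2) ℙ)
    (h4 : ∀ t₀ : ℝ, 0 < t₀ → ∃ φ : ℝ → ℝ, Measurable φ ∧
      (∀ n : ℕ, Integrable (fun ω => φ (sampleMean X n ω * sampleMean Y n ω)) ℙ) ∧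
      ∀ t : ℝ, 0 < t → t < t₀ → ∀ x : ℝ, 0 ≤ x → |g (t * x)| < φ x)
    (h5 : ∀ t₀ : ℝ, 0 < t₀ → ∃ ψ : ℝ → ℝ, Measurable ψ ∧
      (∀ n : ℕ, Integrable (fun ω => ψ (sampleMean X n ω * sampleMean Y n ω)) ℙ) ∧
      ∀ t : ℝ, t₀ < t → ∀ x : ℝ, 0 ≤ x → |g (t * x) / g t| < ψ x)
    :
    Tendsto (fun n : ℕ =>
      (((n : ℝ) - 1) / (n : ℝ)) *
      ((∫ ω, (g (X 0 ω * Y 0 ω / (sampleMean X n ω * sampleMean Y n ω))) * (g (X 0 ω * Y 1 ω / (sampleMean X n ω * sampleMean Y n ω))) ∂ℙ) -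
        2 * (∫ ω, (g (X 0 ω * Y 0 ω / (sampleMean X n ω * sampleMean Y n ω))) * (g (X 0 ω * Y 1 ω)) ∂ℙ) +
        (∫ ω, (g (X 0 ω * Y 0 ω)) * (g (X 0 ω * Y 1 ω)) ∂ℙ)))
      atTop (𝓝 0) := by
  classical
  -- basic measurability
  have hmSX : ∀ n, Measurable (sampleMean X n) := fun n =>
    (Finset.measurable_sum _ (fun i _ => hmX i)).div_const _
  have hmSY : ∀ n, Measurable (sampleMean Y n) := fun n =>
    (Finset.measurable_sum _ (fun i _ => hmY i)).div_const _
  have hmS : ∀ n, Measurable (fun ω => sampleMean X n ω * sampleMean Y n ω) := fun n =>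
    (hmSX n).mul (hmSY n)
  have hmU : Measurable (fun ω => X 0 ω * Y 0 ω) := (hmX 0).mul (hmY 0)
  have hmV : Measurable (fun ω => X 0 ω * Y 1 ω) := (hmX 0).mul (hmY 1)
  -- a.s. positivity of the coordinates
  have hXpos : ∀ i, ∀ᵐ ω ∂(ℙ : Measure Ω), 0 < X i ω := by
    intro i
    rw [ae_iff]
    have hset : {ω | ¬ 0 < X i ω} = X i ⁻¹' (Set.Iic 0) := by
      ext ω; simp [not_lt]
    rw [hset, ← Measure.map_apply (hmX i) measurableSet_Iic, hX i, expMeasure_Iic_zero]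
  have hYpos : ∀ i, ∀ᵐ ω ∂(ℙ : Measure Ω), 0 < Y i ω := by
    intro i
    rw [ae_iff]
    have hset : {ω | ¬ 0 < Y i ω} = Y i ⁻¹' (Set.Iic 0) := by
      ext ω; simp [not_lt]
    rw [hset, ← Measure.map_apply (hmY i) measurableSet_Iic, hY i, expMeasure_Iic_zero]
  have hpos : ∀ᵐ ω ∂(ℙ : Measure Ω), (∀ i, 0 < X i ω) ∧ (∀ i, 0 < Y i ω) :=
    (ae_all_iff.2 hXpos).and (ae_all_iff.2 hYpos)
  -- integrability of powers
  have hpowint : ∀ (W : Ω → ℝ), Measurable W → Measure.map W ℙ = expMeasure 1 →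
      ∀ k : ℕ, Integrable (fun ω => W ω ^ k) ℙ := by
    intro W hW hWmap k
    have h := integrable_pow_expMeasure k
    rw [← hWmap] at h
    exact (integrable_map_measure
      ((measurable_id.pow_const k).aestronglyMeasurable) hW.aemeasurable).1 h
  -- moments of products
  have hmom : ∀ (a : ℝ) (N : ℕ) (j : ℕ),
      Integrable (fun ω => (1 + a * (X 0 ω * Y j ω))^N) ℙ := by
    intro a N j
    have hexp : (fun ω => (1 + a * (X 0 ω * Y j ω))^N)
        = fun ω => ∑ k ∈ Finset.range (N+1),
            (N.choose k : ℝ) * a^k * (X 0 ω^k * Y j ω^k) := by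
      funext ω
      rw [add_comm, add_pow]
      apply Finset.sum_congr rfl
      intro k hk
      rw [mul_pow, one_pow, mul_pow]
      ring
    rw [hexp]
    apply integrable_finset_sum
    intro k hk
    have hix : Integrable (fun ω => X 0 ω ^ k) ℙ := hpowint (X 0) (hmX 0) (hX 0) k
    have hiy : Integrable (fun ω => Y j ω ^ k) ℙ := hpowint (Y j) (hmY j) (hY j) k
    have hindXY : IndepFun (X 0) (Y j) ℙ := by
      have h := hindep.indepFun (show (Sum.inl 0 : ℕ ⊕ ℕ) ≠ Sum.inr j by simp)
      exact h
    have hindpow : IndepFun (fun ω => X 0 ω ^ k) (fun ω => Y j ω ^ k) ℙ :=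
      hindXY.comp (measurable_id.pow_const k) (measurable_id.pow_const k)
    exact (hindpow.integrable_mul hix hiy).const_mul _
  -- strong law of large numbers
  have hSLLN : ∀ (Z : ℕ → Ω → ℝ), (∀ i, Measurable (Z i)) →
      (∀ i, Measure.map (Z i) ℙ = expMeasure 1) →
      (Pairwise (Function.onFun (IndepFun · · (ℙ : Measure Ω)) Z)) →
      ∀ᵐ ω ∂(ℙ : Measure Ω), Tendsto (fun n : ℕ => sampleMean Z n ω) atTop (𝓝 1) := by
    intro Z hmZ hZmap hindZ
    have hint1 : Integrable (Z 0) ℙ := by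
      have h := integrable_pow_expMeasure 1
      rw [← hZmap 0] at h
      have h2' := (integrable_map_measure
        ((measurable_id.pow_const 1).aestronglyMeasurable) (hmZ 0).aemeasurable).1 h
      simpa [Function.comp_def] using h2'
    have hident : ∀ i, IdentDistrib (Z i) (Z 0) ℙ ℙ := fun i =>
      ⟨(hmZ i).aemeasurable, (hmZ 0).aemeasurable, by rw [hZmap i, hZmap 0]⟩
    have h := strong_law_ae_real Z hint1 hindZ hident
    have hmean : (ℙ : Measure Ω)[Z 0] = 1 := by
      have hms : AEStronglyMeasurable (fun x : ℝ => x) (Measure.map (Z 0) ℙ) :=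
        measurable_id.aestronglyMeasurable
      have : ∫ ω, Z 0 ω ∂ℙ = ∫ x, x ∂(expMeasure 1) := by
        rw [← hZmap 0, integral_map (hmZ 0).aemeasurable hms]
      rw [show (ℙ : Measure Ω)[Z 0] = ∫ ω, Z 0 ω ∂ℙ from rfl, this, integral_id_expMeasure]
    rw [hmean] at h
    exact h
  have hpairX : Pairwise (Function.onFun (IndepFun · · (ℙ : Measure Ω)) X) := by
    intro i j hij
    have h := hindep.indepFun (show (Sum.inl i : ℕ ⊕ ℕ) ≠ Sum.inl j by simpa using hij)
    exact h
  have hpairY : Pairwise (Function.onFun (IndepFun · · (ℙ : Measure Ω)) Y) := by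
    intro i j hij
    have h := hindep.indepFun (show (Sum.inr i : ℕ ⊕ ℕ) ≠ Sum.inr j by simpa using hij)
    exact h
  have hSlim : ∀ᵐ ω ∂(ℙ : Measure Ω),
      Tendsto (fun n : ℕ => sampleMean X n ω * sampleMean Y n ω) atTop (𝓝 1) := by
    filter_upwards [hSLLN X hmX hX hpairX, hSLLN Y hmY hY hpairY] with ω h1 h2'
    simpa using h1.mul h2'
  -- growth of g
  obtain ⟨ψ, hψm, hψint, hψ⟩ := h5 1 one_pos
  obtain ⟨C, hC0, m, hpoly⟩ := growth_of_ratio g h2 ψ (fun t ht x hx => hψ t ht x hx)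
  -- Chernoff tail bound
  have hXiid : iIndepFun X ℙ := by
    have h := iIndepFun_precomp hindep (u := (Sum.inl : ℕ → ℕ ⊕ ℕ)) Sum.inl_injective
    exact h
  have hYiid : iIndepFun Y ℙ := by
    have h := iIndepFun_precomp hindep (u := (Sum.inr : ℕ → ℕ ⊕ ℕ)) Sum.inr_injective
    exact h
  have htail : ∀ n : ℕ, 1 ≤ n →
      (ℙ {ω | sampleMean X n ω * sampleMean Y n ω < Real.exp (-4)}).toReal
        ≤ 2 * Real.exp (-(n:ℝ)) := by
    intro n hn
    have hnpos : (0:ℝ) < (n:ℝ) := by exact_mod_cast hn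
    have hchX := chernoff_exp_sample X hmX hX hXiid n
    have hchY := chernoff_exp_sample Y hmY hY hYiid n
    have hsetX : {ω | sampleMean X n ω ≤ Real.exp (-2)}
        = {ω | ∑ i ∈ Finset.range n, X i ω ≤ (n:ℝ) * Real.exp (-2)} := by
      ext ω
      simp only [Set.mem_setOf_eq, sampleMean]
      rw [div_le_iff₀ hnpos, mul_comm]
    have hsetY : {ω | sampleMean Y n ω ≤ Real.exp (-2)}
        = {ω | ∑ i ∈ Finset.range n, Y i ω ≤ (n:ℝ) * Real.exp (-2)} := by
      ext ω
      simp only [Set.mem_setOf_eq, sampleMean]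
      rw [div_le_iff₀ hnpos, mul_comm]
    have hsub : {ω | sampleMean X n ω * sampleMean Y n ω < Real.exp (-4)} ⊆
        {ω | sampleMean X n ω ≤ Real.exp (-2)} ∪ {ω | sampleMean Y n ω ≤ Real.exp (-2)} := by
      intro ω hω
      by_contra hcon
      simp only [Set.mem_union, Set.mem_setOf_eq, not_or, not_le] at hcon
      have hge : Real.exp (-4) ≤ sampleMean X n ω * sampleMean Y n ω := by
        rw [show (-4:ℝ) = -2 + -2 by norm_num, Real.exp_add]
        exact mul_le_mul hcon.1.le hcon.2.le (Real.exp_pos _).le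
          (le_trans (Real.exp_pos _).le hcon.1.le)
      exact absurd hω (not_lt.2 hge)
    calc (ℙ {ω | sampleMean X n ω * sampleMean Y n ω < Real.exp (-4)}).toReal
        ≤ (ℙ ({ω | sampleMean X n ω ≤ Real.exp (-2)}
            ∪ {ω | sampleMean Y n ω ≤ Real.exp (-2)})).toReal :=
          ENNReal.toReal_mono (measure_ne_top _ _) (measure_mono hsub)
      _ ≤ ((ℙ {ω | sampleMean X n ω ≤ Real.exp (-2)})
            + ℙ {ω | sampleMean Y n ω ≤ Real.exp (-2)}).toReal :=
          ENNReal.toReal_mono (by finiteness) (measure_union_le _ _)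
      _ = (ℙ {ω | sampleMean X n ω ≤ Real.exp (-2)}).toReal
            + (ℙ {ω | sampleMean Y n ω ≤ Real.exp (-2)}).toReal :=
          ENNReal.toReal_add (measure_ne_top _ _) (measure_ne_top _ _)
      _ ≤ Real.exp (-(n:ℝ)) + Real.exp (-(n:ℝ)) := by
          apply add_le_add
          · rw [hsetX]; exact hchX
          · rw [hsetY]; exact hchY
      _ = 2 * Real.exp (-(n:ℝ)) := by ring
  -- ratio bound
  have hsm : ∀ (Z : ℕ → Ω → ℝ) (ω : Ω), (∀ i, 0 < Z i ω) → ∀ n : ℕ, 1 ≤ n → ∀ j, j < n →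
      0 < sampleMean Z n ω ∧ Z j ω / sampleMean Z n ω ≤ (n:ℝ) := by
    intro Z ω hZ n hn j hj
    have hnpos : (0:ℝ) < (n:ℝ) := by exact_mod_cast hn
    have hsum : Z j ω ≤ ∑ i ∈ Finset.range n, Z i ω :=
      Finset.single_le_sum (fun i _ => (hZ i).le) (Finset.mem_range.2 hj)
    have hsumpos : 0 < ∑ i ∈ Finset.range n, Z i ω :=
      Finset.sum_pos (fun i _ => hZ i) (Finset.nonempty_range_iff.2 (by omega))
    have hsmpos : 0 < sampleMean Z n ω := div_pos hsumpos hnpos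
    refine ⟨hsmpos, ?_⟩
    rw [div_le_iff₀ hsmpos]
    calc Z j ω ≤ ∑ i ∈ Finset.range n, Z i ω := hsum
    _ = (n:ℝ) * sampleMean Z n ω := by
        rw [sampleMean]
        field_simp
  
  -- basic constants
  have hε₀pos : (0:ℝ) < Real.exp (-4) := Real.exp_pos _
  have hε₀lt1 : Real.exp (-4) < 1 := by
    rw [show (1:ℝ) = Real.exp 0 from Real.exp_zero.symm]
    exact Real.exp_lt_exp.2 (by norm_num)
  have hE44 : Real.exp 4 * Real.exp (-4) = 1 := by
    rw [← Real.exp_add]; norm_num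
  have hsq_pow : ∀ (x : ℝ), (x^m)^2 = x^(2*m) := fun x => by
    rw [← pow_mul, Nat.mul_comm]
  have hgb1 : ∀ (u s : ℝ), 0 ≤ u → Real.exp (-4) ≤ s → |g (u / s)| ≤ C * (1 + Real.exp 4 * u)^m := by
    intro u s hu hs
    have hspos : 0 < s := lt_of_lt_of_le hε₀pos hs
    have hdiv : 0 ≤ u / s := div_nonneg hu hspos.le
    have h1 := hpoly (u/s) hdiv
    have hds : u / s ≤ Real.exp 4 * u := by
      rw [div_le_iff₀ hspos]
      have h4s : 1 ≤ Real.exp 4 * s := by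
        calc (1:ℝ) = Real.exp 4 * Real.exp (-4) := hE44.symm
        _ ≤ Real.exp 4 * s := mul_le_mul_of_nonneg_left hs (Real.exp_pos 4).le
      calc u = u * 1 := (mul_one u).symm
      _ ≤ u * (Real.exp 4 * s) := mul_le_mul_of_nonneg_left h4s hu
      _ = Real.exp 4 * u * s := by ring
    refine le_trans h1 ?_
    apply mul_le_mul_of_nonneg_left _ hC0
    apply pow_le_pow_left₀ (by positivity) (by linarith)
  have hgb2 : ∀ (y : ℝ), 0 ≤ y → |g y| ≤ C * (1 + 1 * y)^m := by
    intro y hy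
    simpa using hpoly y hy
  have hprod_sq : ∀ (p q : ℝ), 0 ≤ p → 0 ≤ q → (C*p) * (C*q) ≤ C^2/2 * (p^2 + q^2) := by
    intro p q hp hq
    nlinarith [sq_nonneg (p - q), sq_nonneg C]
  have hyoung_gen : ∀ (e p : ℝ), 0 < e → 0 ≤ p → p ≤ (e * p^2 + e⁻¹ * 1)/2 := by
    intro e p he hp
    have hee : e * e⁻¹ = 1 := mul_inv_cancel₀ he.ne'
    nlinarith [sq_nonneg (e*p - 1), he]
  -- dominators are integrable
  have hDint : Integrable (fun ω => C^2/2 *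
      ((1 + Real.exp 4 * (X 0 ω * Y 0 ω))^(2*m) + (1 + Real.exp 4 * (X 0 ω * Y 1 ω))^(2*m))) ℙ :=
    ((hmom (Real.exp 4) (2*m) 0).add (hmom (Real.exp 4) (2*m) 1)).const_mul _
  have hDBint : Integrable (fun ω => C^2/2 *
      ((1 + Real.exp 4 * (X 0 ω * Y 0 ω))^(2*m) + (1 + 1 * (X 0 ω * Y 1 ω))^(2*m))) ℙ :=
    ((hmom (Real.exp 4) (2*m) 0).add (hmom 1 (2*m) 1)).const_mul _
  -- measurability of the truncated integrands
  have hmeasA : ∀ n : ℕ, AEStronglyMeasurable (fun ω =>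
      if Real.exp (-4) ≤ sampleMean X n ω * sampleMean Y n ω then g ((X 0 ω * Y 0 ω) / (sampleMean X n ω * sampleMean Y n ω)) * g ((X 0 ω * Y 1 ω) / (sampleMean X n ω * sampleMean Y n ω)) else 0) ℙ := fun n =>
    (Measurable.ite (measurableSet_le measurable_const (hmS n))
      ((hgm.comp (hmU.div (hmS n))).mul (hgm.comp (hmV.div (hmS n))))
      measurable_const).aestronglyMeasurable
  have hmeasB : ∀ n : ℕ, AEStronglyMeasurable (fun ω =>
      if Real.exp (-4) ≤ sampleMean X n ω * sampleMean Y n ω then g ((X 0 ω * Y 0 ω) / (sampleMean X n ω * sampleMean Y n ω)) * g (X 0 ω * Y 1 ω) else 0) ℙ := fun n =>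
    (Measurable.ite (measurableSet_le measurable_const (hmS n))
      ((hgm.comp (hmU.div (hmS n))).mul (hgm.comp hmV))
      measurable_const).aestronglyMeasurable
  have hmeasA' : ∀ n : ℕ, AEStronglyMeasurable (fun ω =>
      if Real.exp (-4) ≤ sampleMean X n ω * sampleMean Y n ω then 0 else g ((X 0 ω * Y 0 ω) / (sampleMean X n ω * sampleMean Y n ω)) * g ((X 0 ω * Y 1 ω) / (sampleMean X n ω * sampleMean Y n ω))) ℙ := fun n =>
    (Measurable.ite (measurableSet_le measurable_const (hmS n)) measurable_const
      ((hgm.comp (hmU.div (hmS n))).mul (hgm.comp (hmV.div (hmS n))))).aestronglyMeasurable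
  have hmeasB' : ∀ n : ℕ, AEStronglyMeasurable (fun ω =>
      if Real.exp (-4) ≤ sampleMean X n ω * sampleMean Y n ω then 0 else g ((X 0 ω * Y 0 ω) / (sampleMean X n ω * sampleMean Y n ω)) * g (X 0 ω * Y 1 ω)) ℙ := fun n =>
    (Measurable.ite (measurableSet_le measurable_const (hmS n)) measurable_const
      ((hgm.comp (hmU.div (hmS n))).mul (hgm.comp hmV))).aestronglyMeasurable
  -- domination for the good parts
  have hDboundA : ∀ n : ℕ, ∀ᵐ ω ∂(ℙ : Measure Ω),
      ‖(if Real.exp (-4) ≤ sampleMean X n ω * sampleMean Y n ω then g ((X 0 ω * Y 0 ω) / (sampleMean X n ω * sampleMean Y n ω)) * g ((X 0 ω * Y 1 ω) / (sampleMean X n ω * sampleMean Y n ω)) else 0)‖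
        ≤ C^2/2 * ((1 + Real.exp 4 * (X 0 ω * Y 0 ω))^(2*m) + (1 + Real.exp 4 * (X 0 ω * Y 1 ω))^(2*m)) := by
    intro n
    filter_upwards [hpos] with ω hω
    have hU0 : 0 ≤ X 0 ω * Y 0 ω := (mul_pos (hω.1 0) (hω.2 0)).le
    have hV0 : 0 ≤ X 0 ω * Y 1 ω := (mul_pos (hω.1 0) (hω.2 1)).le
    by_cases hc : Real.exp (-4) ≤ sampleMean X n ω * sampleMean Y n ω
    · rw [if_pos hc]
      have h1 := hgb1 (X 0 ω * Y 0 ω) (sampleMean X n ω * sampleMean Y n ω) hU0 hc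
      have h2' := hgb1 (X 0 ω * Y 1 ω) (sampleMean X n ω * sampleMean Y n ω) hV0 hc
      rw [Real.norm_eq_abs, abs_mul]
      calc |g ((X 0 ω * Y 0 ω) / (sampleMean X n ω * sampleMean Y n ω))| * |g ((X 0 ω * Y 1 ω) / (sampleMean X n ω * sampleMean Y n ω))|
          ≤ (C * (1 + Real.exp 4 * (X 0 ω * Y 0 ω))^m) * (C * (1 + Real.exp 4 * (X 0 ω * Y 1 ω))^m) :=
            mul_le_mul h1 h2' (abs_nonneg _) (le_trans (abs_nonneg _) h1)
        _ ≤ C^2/2 * (((1 + Real.exp 4 * (X 0 ω * Y 0 ω))^m)^2 + ((1 + Real.exp 4 * (X 0 ω * Y 1 ω))^m)^2) :=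
            hprod_sq _ _ (by positivity) (by positivity)
        _ = C^2/2 * ((1 + Real.exp 4 * (X 0 ω * Y 0 ω))^(2*m) + (1 + Real.exp 4 * (X 0 ω * Y 1 ω))^(2*m)) := by
            rw [hsq_pow, hsq_pow]
    · rw [if_neg hc]
      simp only [norm_zero]
      apply mul_nonneg (by positivity)
      apply add_nonneg
      · exact pow_nonneg (by positivity) _
      · exact pow_nonneg (by positivity) _
  have hDboundB : ∀ n : ℕ, ∀ᵐ ω ∂(ℙ : Measure Ω),
      ‖(if Real.exp (-4) ≤ sampleMean X n ω * sampleMean Y n ω then g ((X 0 ω * Y 0 ω) / (sampleMean X n ω * sampleMean Y n ω)) * g (X 0 ω * Y 1 ω) else 0)‖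
        ≤ C^2/2 * ((1 + Real.exp 4 * (X 0 ω * Y 0 ω))^(2*m) + (1 + 1 * (X 0 ω * Y 1 ω))^(2*m)) := by
    intro n
    filter_upwards [hpos] with ω hω
    have hU0 : 0 ≤ X 0 ω * Y 0 ω := (mul_pos (hω.1 0) (hω.2 0)).le
    have hV0 : 0 ≤ X 0 ω * Y 1 ω := (mul_pos (hω.1 0) (hω.2 1)).le
    by_cases hc : Real.exp (-4) ≤ sampleMean X n ω * sampleMean Y n ω
    · rw [if_pos hc]
      have h1 := hgb1 (X 0 ω * Y 0 ω) (sampleMean X n ω * sampleMean Y n ω) hU0 hc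
      have h2' := hgb2 (X 0 ω * Y 1 ω) hV0
      rw [Real.norm_eq_abs, abs_mul]
      calc |g ((X 0 ω * Y 0 ω) / (sampleMean X n ω * sampleMean Y n ω))| * |g (X 0 ω * Y 1 ω)|
          ≤ (C * (1 + Real.exp 4 * (X 0 ω * Y 0 ω))^m) * (C * (1 + 1 * (X 0 ω * Y 1 ω))^m) :=
            mul_le_mul h1 h2' (abs_nonneg _) (le_trans (abs_nonneg _) h1)
        _ ≤ C^2/2 * (((1 + Real.exp 4 * (X 0 ω * Y 0 ω))^m)^2 + ((1 + 1 * (X 0 ω * Y 1 ω))^m)^2) :=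
            hprod_sq _ _ (by positivity) (by positivity)
        _ = C^2/2 * ((1 + Real.exp 4 * (X 0 ω * Y 0 ω))^(2*m) + (1 + 1 * (X 0 ω * Y 1 ω))^(2*m)) := by
            rw [hsq_pow, hsq_pow]
    · rw [if_neg hc]
      simp only [norm_zero]
      apply mul_nonneg (by positivity)
      apply add_nonneg
      · exact pow_nonneg (by positivity) _
      · exact pow_nonneg (by positivity) _
  -- a.e. limits of the good parts
  have hlimA : ∀ᵐ ω ∂(ℙ : Measure Ω), Tendsto (fun n : ℕ =>
      if Real.exp (-4) ≤ sampleMean X n ω * sampleMean Y n ω then g ((X 0 ω * Y 0 ω) / (sampleMean X n ω * sampleMean Y n ω)) * g ((X 0 ω * Y 1 ω) / (sampleMean X n ω * sampleMean Y n ω)) else 0) atTop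
      (𝓝 (g (X 0 ω * Y 0 ω) * g (X 0 ω * Y 1 ω))) := by
    filter_upwards [hpos, hSlim] with ω hω hSl
    have hU0 : 0 ≤ X 0 ω * Y 0 ω := (mul_pos (hω.1 0) (hω.2 0)).le
    have hV0 : 0 ≤ X 0 ω * Y 1 ω := (mul_pos (hω.1 0) (hω.2 1)).le
    have hev : ∀ᶠ n : ℕ in atTop, Real.exp (-4) ≤ sampleMean X n ω * sampleMean Y n ω := hSl.eventually_const_le hε₀lt1
    have hlim1 : Tendsto (fun n : ℕ => g ((X 0 ω * Y 0 ω) / (sampleMean X n ω * sampleMean Y n ω))) atTop (𝓝 (g (X 0 ω * Y 0 ω))) := by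
      apply (h2 (X 0 ω * Y 0 ω) hU0).tendsto.comp
      rw [tendsto_nhdsWithin_iff]
      constructor
      · have h := Tendsto.div (tendsto_const_nhds (x := X 0 ω * Y 0 ω)) hSl one_ne_zero
        simpa [Pi.div_def] using h
      · filter_upwards [hev] with n hn
        exact div_nonneg hU0 (le_trans hε₀pos.le hn)
    have hlim2 : Tendsto (fun n : ℕ => g ((X 0 ω * Y 1 ω) / (sampleMean X n ω * sampleMean Y n ω))) atTop (𝓝 (g (X 0 ω * Y 1 ω))) := by
      apply (h2 (X 0 ω * Y 1 ω) hV0).tendsto.comp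
      rw [tendsto_nhdsWithin_iff]
      constructor
      · have h := Tendsto.div (tendsto_const_nhds (x := X 0 ω * Y 1 ω)) hSl one_ne_zero
        simpa [Pi.div_def] using h
      · filter_upwards [hev] with n hn
        exact div_nonneg hV0 (le_trans hε₀pos.le hn)
    apply Tendsto.congr' ?_ (hlim1.mul hlim2)
    filter_upwards [hev] with n hn
    rw [if_pos hn]
  have hlimB : ∀ᵐ ω ∂(ℙ : Measure Ω), Tendsto (fun n : ℕ =>
      if Real.exp (-4) ≤ sampleMean X n ω * sampleMean Y n ω then g ((X 0 ω * Y 0 ω) / (sampleMean X n ω * sampleMean Y n ω)) * g (X 0 ω * Y 1 ω) else 0) atTop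
      (𝓝 (g (X 0 ω * Y 0 ω) * g (X 0 ω * Y 1 ω))) := by
    filter_upwards [hpos, hSlim] with ω hω hSl
    have hU0 : 0 ≤ X 0 ω * Y 0 ω := (mul_pos (hω.1 0) (hω.2 0)).le
    have hev : ∀ᶠ n : ℕ in atTop, Real.exp (-4) ≤ sampleMean X n ω * sampleMean Y n ω := hSl.eventually_const_le hε₀lt1
    have hlim1 : Tendsto (fun n : ℕ => g ((X 0 ω * Y 0 ω) / (sampleMean X n ω * sampleMean Y n ω))) atTop (𝓝 (g (X 0 ω * Y 0 ω))) := by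
      apply (h2 (X 0 ω * Y 0 ω) hU0).tendsto.comp
      rw [tendsto_nhdsWithin_iff]
      constructor
      · have h := Tendsto.div (tendsto_const_nhds (x := X 0 ω * Y 0 ω)) hSl one_ne_zero
        simpa [Pi.div_def] using h
      · filter_upwards [hev] with n hn
        exact div_nonneg hU0 (le_trans hε₀pos.le hn)
    apply Tendsto.congr' ?_ (hlim1.mul tendsto_const_nhds)
    filter_upwards [hev] with n hn
    rw [if_pos hn]
  -- good part convergence (dominated convergence)
  have hgoodA := tendsto_integral_of_dominated_convergence _ hmeasA hDint hDboundA hlimA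
  have hgoodB := tendsto_integral_of_dominated_convergence _ hmeasB hDBint hDboundB hlimB
  
  -- the bad set
  have hbadmeas : ∀ n : ℕ, MeasurableSet {ω' : Ω | sampleMean X n ω' * sampleMean Y n ω' < Real.exp (-4)} := fun n =>
    measurableSet_lt (hmS n) measurable_const
  -- pointwise ratio bounds on the bad set
  have hratio : ∀ n : ℕ, 2 ≤ n → ∀ ω : Ω, (∀ i, 0 < X i ω) → (∀ i, 0 < Y i ω) →
      0 < sampleMean X n ω * sampleMean Y n ω ∧ (X 0 ω * Y 0 ω) / (sampleMean X n ω * sampleMean Y n ω) ≤ (n:ℝ)^2 ∧ (X 0 ω * Y 1 ω) / (sampleMean X n ω * sampleMean Y n ω) ≤ (n:ℝ)^2 := by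
    intro n hn ω hXω hYω
    have hn1 : 1 ≤ n := by omega
    obtain ⟨hsX, hrX⟩ := hsm X ω hXω n hn1 0 (by omega)
    obtain ⟨hsY0, hrY0⟩ := hsm Y ω hYω n hn1 0 (by omega)
    obtain ⟨hsY1, hrY1⟩ := hsm Y ω hYω n hn1 1 (by omega)
    have hSpos : 0 < sampleMean X n ω * sampleMean Y n ω := mul_pos hsX hsY0
    refine ⟨hSpos, ?_, ?_⟩
    · rw [show (X 0 ω * Y 0 ω) / (sampleMean X n ω * sampleMean Y n ω)
          = (X 0 ω / sampleMean X n ω) * (Y 0 ω / sampleMean Y n ω) from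
        (div_mul_div_comm _ _ _ _).symm]
      calc (X 0 ω / sampleMean X n ω) * (Y 0 ω / sampleMean Y n ω)
          ≤ (n:ℝ) * (n:ℝ) := mul_le_mul hrX hrY0
            (div_nonneg (hYω 0).le hsY0.le) (le_trans (div_nonneg (hXω 0).le hsX.le) hrX)
        _ = (n:ℝ)^2 := (sq (n:ℝ)).symm
    · rw [show (X 0 ω * Y 1 ω) / (sampleMean X n ω * sampleMean Y n ω)
          = (X 0 ω / sampleMean X n ω) * (Y 1 ω / sampleMean Y n ω) from
        (div_mul_div_comm _ _ _ _).symm]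
      calc (X 0 ω / sampleMean X n ω) * (Y 1 ω / sampleMean Y n ω)
          ≤ (n:ℝ) * (n:ℝ) := mul_le_mul hrX hrY1
            (div_nonneg (hYω 1).le hsY1.le) (le_trans (div_nonneg (hXω 0).le hsX.le) hrX)
        _ = (n:ℝ)^2 := (sq (n:ℝ)).symm
  -- bad part of A : integrable and small
  have hbadA : ∀ n : ℕ, 2 ≤ n →
      Integrable (fun ω => if Real.exp (-4) ≤ sampleMean X n ω * sampleMean Y n ω then 0
        else g ((X 0 ω * Y 0 ω) / (sampleMean X n ω * sampleMean Y n ω)) * g ((X 0 ω * Y 1 ω) / (sampleMean X n ω * sampleMean Y n ω))) ℙ ∧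
      ‖∫ ω, (if Real.exp (-4) ≤ sampleMean X n ω * sampleMean Y n ω then 0
        else g ((X 0 ω * Y 0 ω) / (sampleMean X n ω * sampleMean Y n ω)) * g ((X 0 ω * Y 1 ω) / (sampleMean X n ω * sampleMean Y n ω))) ∂ℙ‖
        ≤ 2*C^2 * (1+(n:ℝ)^2)^(2*m) * Real.exp (-(1*(n:ℝ))) := by
    intro n hn2
    have hn1 : 1 ≤ n := by omega
    have hKnn : (0:ℝ) ≤ C^2 * (1+(n:ℝ)^2)^(2*m) := by positivity
    have hptw : ∀ᵐ ω ∂(ℙ : Measure Ω),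
        ‖(if Real.exp (-4) ≤ sampleMean X n ω * sampleMean Y n ω then 0 else g ((X 0 ω * Y 0 ω) / (sampleMean X n ω * sampleMean Y n ω)) * g ((X 0 ω * Y 1 ω) / (sampleMean X n ω * sampleMean Y n ω)))‖
          ≤ Set.indicator {ω' : Ω | sampleMean X n ω' * sampleMean Y n ω' < Real.exp (-4)} (fun _ => C^2 * (1+(n:ℝ)^2)^(2*m)) ω := by
      filter_upwards [hpos] with ω hω
      by_cases hc : Real.exp (-4) ≤ sampleMean X n ω * sampleMean Y n ω
      · rw [if_pos hc]
        simp only [norm_zero]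
        exact Set.indicator_nonneg (fun _ _ => hKnn) _
      · rw [if_neg hc]
        push_neg at hc
        rw [Set.indicator_of_mem (show ω ∈ {ω' : Ω | sampleMean X n ω' * sampleMean Y n ω' < Real.exp (-4)} from hc)]
        obtain ⟨hSpos, hUr, hVr⟩ := hratio n hn2 ω hω.1 hω.2
        have hU0 : 0 ≤ X 0 ω * Y 0 ω := (mul_pos (hω.1 0) (hω.2 0)).le
        have hV0 : 0 ≤ X 0 ω * Y 1 ω := (mul_pos (hω.1 0) (hω.2 1)).le
        have hb1 : |g ((X 0 ω * Y 0 ω) / (sampleMean X n ω * sampleMean Y n ω))| ≤ C * (1+(n:ℝ)^2)^m := by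
          refine le_trans (by simpa using hpoly _ (div_nonneg hU0 hSpos.le)) ?_
          apply mul_le_mul_of_nonneg_left _ hC0
          apply pow_le_pow_left₀ (by positivity) (by linarith)
        have hb2 : |g ((X 0 ω * Y 1 ω) / (sampleMean X n ω * sampleMean Y n ω))| ≤ C * (1+(n:ℝ)^2)^m := by
          refine le_trans (by simpa using hpoly _ (div_nonneg hV0 hSpos.le)) ?_
          apply mul_le_mul_of_nonneg_left _ hC0
          apply pow_le_pow_left₀ (by positivity) (by linarith)
        rw [Real.norm_eq_abs, abs_mul]
        calc |g ((X 0 ω * Y 0 ω) / (sampleMean X n ω * sampleMean Y n ω))| * |g ((X 0 ω * Y 1 ω) / (sampleMean X n ω * sampleMean Y n ω))|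
            ≤ (C * (1+(n:ℝ)^2)^m) * (C * (1+(n:ℝ)^2)^m) :=
              mul_le_mul hb1 hb2 (abs_nonneg _) (le_trans (abs_nonneg _) hb1)
          _ = C^2 * ((1+(n:ℝ)^2)^m)^2 := by ring
          _ = C^2 * (1+(n:ℝ)^2)^(2*m) := by rw [hsq_pow]
    have hind_int : Integrable
        (Set.indicator {ω' : Ω | sampleMean X n ω' * sampleMean Y n ω' < Real.exp (-4)} (fun _ => C^2 * (1+(n:ℝ)^2)^(2*m))) ℙ :=
      (integrable_const _).indicator (hbadmeas n)
    have hint : Integrable (fun ω => if Real.exp (-4) ≤ sampleMean X n ω * sampleMean Y n ω then 0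
        else g ((X 0 ω * Y 0 ω) / (sampleMean X n ω * sampleMean Y n ω)) * g ((X 0 ω * Y 1 ω) / (sampleMean X n ω * sampleMean Y n ω))) ℙ :=
      Integrable.mono' hind_int (hmeasA' n) hptw
    refine ⟨hint, ?_⟩
    calc ‖∫ ω, (if Real.exp (-4) ≤ sampleMean X n ω * sampleMean Y n ω then 0
          else g ((X 0 ω * Y 0 ω) / (sampleMean X n ω * sampleMean Y n ω)) * g ((X 0 ω * Y 1 ω) / (sampleMean X n ω * sampleMean Y n ω))) ∂ℙ‖
        ≤ ∫ ω, ‖(if Real.exp (-4) ≤ sampleMean X n ω * sampleMean Y n ω then 0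
          else g ((X 0 ω * Y 0 ω) / (sampleMean X n ω * sampleMean Y n ω)) * g ((X 0 ω * Y 1 ω) / (sampleMean X n ω * sampleMean Y n ω)))‖ ∂ℙ := norm_integral_le_integral_norm _
      _ ≤ ∫ ω, Set.indicator {ω' : Ω | sampleMean X n ω' * sampleMean Y n ω' < Real.exp (-4)} (fun _ => C^2 * (1+(n:ℝ)^2)^(2*m)) ω ∂ℙ :=
          integral_mono_ae hint.norm hind_int hptw
      _ = (ℙ {ω' : Ω | sampleMean X n ω' * sampleMean Y n ω' < Real.exp (-4)}).toReal • (C^2 * (1+(n:ℝ)^2)^(2*m)) :=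
          integral_indicator_const _ (hbadmeas n)
      _ ≤ (2 * Real.exp (-(n:ℝ))) * (C^2 * (1+(n:ℝ)^2)^(2*m)) := by
          rw [smul_eq_mul]
          exact mul_le_mul_of_nonneg_right (htail n hn1) hKnn
      _ = 2*C^2 * (1+(n:ℝ)^2)^(2*m) * Real.exp (-(1*(n:ℝ))) := by
          rw [one_mul]; ring
  have hbadA0 : Tendsto (fun n : ℕ => ∫ ω, (if Real.exp (-4) ≤ sampleMean X n ω * sampleMean Y n ω then 0
      else g ((X 0 ω * Y 0 ω) / (sampleMean X n ω * sampleMean Y n ω)) * g ((X 0 ω * Y 1 ω) / (sampleMean X n ω * sampleMean Y n ω))) ∂ℙ) atTop (𝓝 0) := by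
    apply squeeze_zero_norm' ?_ (tendsto_poly_mul_exp_neg (2*C^2) (2*m) 1 one_pos)
    filter_upwards [eventually_ge_atTop 2] with n hn2
    exact (hbadA n hn2).2
  
  -- bad part of B : integrable and small
  have hbadB : ∀ n : ℕ, 2 ≤ n →
      Integrable (fun ω => if Real.exp (-4) ≤ sampleMean X n ω * sampleMean Y n ω then 0
        else g ((X 0 ω * Y 0 ω) / (sampleMean X n ω * sampleMean Y n ω)) * g (X 0 ω * Y 1 ω)) ℙ ∧
      ‖∫ ω, (if Real.exp (-4) ≤ sampleMean X n ω * sampleMean Y n ω then 0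
        else g ((X 0 ω * Y 0 ω) / (sampleMean X n ω * sampleMean Y n ω)) * g (X 0 ω * Y 1 ω)) ∂ℙ‖
        ≤ (C^2 * ((∫ ω, (1 + 1 * (X 0 ω * Y 1 ω))^(2*m) ∂ℙ) + 2) / 2) * (1+(n:ℝ)^2)^m
            * Real.exp (-(1/2*(n:ℝ))) := by
    intro n hn2
    have hn1 : 1 ≤ n := by omega
    set e2 : ℝ := Real.exp (-(1/2*(n:ℝ))) with he2def
    have he2pos : 0 < e2 := Real.exp_pos _
    set K2 : ℝ := C^2 * (1+(n:ℝ)^2)^m with hK2def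
    have hK2nn : 0 ≤ K2 := by positivity
    have hptw : ∀ᵐ ω ∂(ℙ : Measure Ω),
        ‖(if Real.exp (-4) ≤ sampleMean X n ω * sampleMean Y n ω then 0 else g ((X 0 ω * Y 0 ω) / (sampleMean X n ω * sampleMean Y n ω)) * g (X 0 ω * Y 1 ω))‖
          ≤ K2*e2/2 * (1 + 1 * (X 0 ω * Y 1 ω))^(2*m)
            + K2*e2⁻¹/2 * Set.indicator {ω' : Ω | sampleMean X n ω' * sampleMean Y n ω' < Real.exp (-4)} (fun _ => (1:ℝ)) ω := by
      filter_upwards [hpos] with ω hω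
      have hV0 : 0 ≤ X 0 ω * Y 1 ω := (mul_pos (hω.1 0) (hω.2 1)).le
      have hVp : (0:ℝ) ≤ (1 + 1 * (X 0 ω * Y 1 ω))^(2*m) := pow_nonneg (by linarith) _
      by_cases hc : Real.exp (-4) ≤ sampleMean X n ω * sampleMean Y n ω
      · rw [if_pos hc]
        simp only [norm_zero]
        apply add_nonneg
        · positivity
        · apply mul_nonneg (by positivity)
          exact Set.indicator_nonneg (fun _ _ => zero_le_one) _
      · rw [if_neg hc]
        push_neg at hc
        rw [Set.indicator_of_mem (show ω ∈ {ω' : Ω | sampleMean X n ω' * sampleMean Y n ω' < Real.exp (-4)} from hc)]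
        obtain ⟨hSpos, hUr, hVr⟩ := hratio n hn2 ω hω.1 hω.2
        have hU0 : 0 ≤ X 0 ω * Y 0 ω := (mul_pos (hω.1 0) (hω.2 0)).le
        have hb1 : |g ((X 0 ω * Y 0 ω) / (sampleMean X n ω * sampleMean Y n ω))| ≤ C * (1+(n:ℝ)^2)^m := by
          refine le_trans (by simpa using hpoly _ (div_nonneg hU0 hSpos.le)) ?_
          apply mul_le_mul_of_nonneg_left _ hC0
          apply pow_le_pow_left₀ (by positivity) (by linarith)
        have hb2 : |g (X 0 ω * Y 1 ω)| ≤ C * (1 + 1 * (X 0 ω * Y 1 ω))^m := hgb2 _ hV0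
        have hstep1 : ‖g ((X 0 ω * Y 0 ω) / (sampleMean X n ω * sampleMean Y n ω)) * g (X 0 ω * Y 1 ω)‖ ≤ K2 * (1 + 1 * (X 0 ω * Y 1 ω))^m := by
          rw [Real.norm_eq_abs, abs_mul, hK2def]
          calc |g ((X 0 ω * Y 0 ω) / (sampleMean X n ω * sampleMean Y n ω))| * |g (X 0 ω * Y 1 ω)|
              ≤ (C * (1+(n:ℝ)^2)^m) * (C * (1 + 1 * (X 0 ω * Y 1 ω))^m) :=
                mul_le_mul hb1 hb2 (abs_nonneg _) (le_trans (abs_nonneg _) hb1)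
            _ ≤ C^2 * (1+(n:ℝ)^2)^m * (1 + 1 * (X 0 ω * Y 1 ω))^m := by
                rw [show (C * (1+(n:ℝ)^2)^m) * (C * (1 + 1 * (X 0 ω * Y 1 ω))^m)
                  = C^2 * (1+(n:ℝ)^2)^m * (1 + 1 * (X 0 ω * Y 1 ω))^m by ring]
        refine le_trans hstep1 ?_
        -- Young: p ≤ (e2 p² + e2⁻¹)/2 with p = (1+V)^m
        have hyoung : (1 + 1 * (X 0 ω * Y 1 ω))^m
            ≤ (e2 * (1 + 1 * (X 0 ω * Y 1 ω))^(2*m) + e2⁻¹ * 1) / 2 := by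
          have h := hyoung_gen e2 ((1 + 1 * (X 0 ω * Y 1 ω))^m) he2pos
            (pow_nonneg (by linarith) _)
          rwa [hsq_pow] at h
        calc K2 * (1 + 1 * (X 0 ω * Y 1 ω))^m
            ≤ K2 * ((e2 * (1 + 1 * (X 0 ω * Y 1 ω))^(2*m) + e2⁻¹ * 1) / 2) :=
              mul_le_mul_of_nonneg_left hyoung hK2nn
          _ = K2*e2/2 * (1 + 1 * (X 0 ω * Y 1 ω))^(2*m) + K2*e2⁻¹/2 * 1 := by ring
    have hrho_int : Integrable (fun ω => K2*e2/2 * (1 + 1 * (X 0 ω * Y 1 ω))^(2*m)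
        + K2*e2⁻¹/2 * Set.indicator {ω' : Ω | sampleMean X n ω' * sampleMean Y n ω' < Real.exp (-4)} (fun _ => (1:ℝ)) ω) ℙ :=
      ((hmom 1 (2*m) 1).const_mul _).add
        (((integrable_const (1:ℝ)).indicator (hbadmeas n)).const_mul _)
    have hint : Integrable (fun ω => if Real.exp (-4) ≤ sampleMean X n ω * sampleMean Y n ω then 0
        else g ((X 0 ω * Y 0 ω) / (sampleMean X n ω * sampleMean Y n ω)) * g (X 0 ω * Y 1 ω)) ℙ :=
      Integrable.mono' hrho_int (hmeasB' n) hptw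
    refine ⟨hint, ?_⟩
    have he2inv : e2⁻¹ * Real.exp (-(n:ℝ)) = e2 := by
      rw [he2def, ← Real.exp_neg, ← Real.exp_add]
      congr 1
      ring
    calc ‖∫ ω, (if Real.exp (-4) ≤ sampleMean X n ω * sampleMean Y n ω then 0
          else g ((X 0 ω * Y 0 ω) / (sampleMean X n ω * sampleMean Y n ω)) * g (X 0 ω * Y 1 ω)) ∂ℙ‖
        ≤ ∫ ω, ‖(if Real.exp (-4) ≤ sampleMean X n ω * sampleMean Y n ω then 0
          else g ((X 0 ω * Y 0 ω) / (sampleMean X n ω * sampleMean Y n ω)) * g (X 0 ω * Y 1 ω))‖ ∂ℙ := norm_integral_le_integral_norm _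
      _ ≤ ∫ ω, (K2*e2/2 * (1 + 1 * (X 0 ω * Y 1 ω))^(2*m)
          + K2*e2⁻¹/2 * Set.indicator {ω' : Ω | sampleMean X n ω' * sampleMean Y n ω' < Real.exp (-4)} (fun _ => (1:ℝ)) ω) ∂ℙ :=
          integral_mono_ae hint.norm hrho_int hptw
      _ = K2*e2/2 * (∫ ω, (1 + 1 * (X 0 ω * Y 1 ω))^(2*m) ∂ℙ)
          + K2*e2⁻¹/2 * (ℙ {ω' : Ω | sampleMean X n ω' * sampleMean Y n ω' < Real.exp (-4)}).toReal := by
          rw [integral_add ((hmom 1 (2*m) 1).const_mul _)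
            (((integrable_const (1:ℝ)).indicator (hbadmeas n)).const_mul _),
            integral_const_mul, integral_const_mul,
            integral_indicator_const _ (hbadmeas n)]
          simp [measureReal_def]
      _ ≤ K2*e2/2 * (∫ ω, (1 + 1 * (X 0 ω * Y 1 ω))^(2*m) ∂ℙ)
          + K2*e2⁻¹/2 * (2 * Real.exp (-(n:ℝ))) := by
          apply add_le_add le_rfl
          exact mul_le_mul_of_nonneg_left (htail n hn1) (by positivity)
      _ = (C^2 * ((∫ ω, (1 + 1 * (X 0 ω * Y 1 ω))^(2*m) ∂ℙ) + 2) / 2) * (1+(n:ℝ)^2)^m * e2 := by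
          rw [show K2*e2⁻¹/2 * (2 * Real.exp (-(n:ℝ))) = K2 * (e2⁻¹ * Real.exp (-(n:ℝ))) by ring,
            he2inv, hK2def]
          ring
  have hbadB0 : Tendsto (fun n : ℕ => ∫ ω, (if Real.exp (-4) ≤ sampleMean X n ω * sampleMean Y n ω then 0
      else g ((X 0 ω * Y 0 ω) / (sampleMean X n ω * sampleMean Y n ω)) * g (X 0 ω * Y 1 ω)) ∂ℙ) atTop (𝓝 0) := by
    apply squeeze_zero_norm' ?_ (tendsto_poly_mul_exp_neg
      (C^2 * ((∫ ω, (1 + 1 * (X 0 ω * Y 1 ω))^(2*m) ∂ℙ) + 2) / 2) m (1/2) (by norm_num))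
    filter_upwards [eventually_ge_atTop 2] with n hn2
    exact (hbadB n hn2).2
  
  -- splitting of the integrals
  have hsplitA : ∀ᶠ n : ℕ in atTop,
      (∫ ω, (g ((X 0 ω * Y 0 ω) / (sampleMean X n ω * sampleMean Y n ω))) * (g ((X 0 ω * Y 1 ω) / (sampleMean X n ω * sampleMean Y n ω))) ∂ℙ)
        = (∫ ω, (if Real.exp (-4) ≤ sampleMean X n ω * sampleMean Y n ω then g ((X 0 ω * Y 0 ω) / (sampleMean X n ω * sampleMean Y n ω)) * g ((X 0 ω * Y 1 ω) / (sampleMean X n ω * sampleMean Y n ω)) else 0) ∂ℙ)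
          + (∫ ω, (if Real.exp (-4) ≤ sampleMean X n ω * sampleMean Y n ω then 0 else g ((X 0 ω * Y 0 ω) / (sampleMean X n ω * sampleMean Y n ω)) * g ((X 0 ω * Y 1 ω) / (sampleMean X n ω * sampleMean Y n ω))) ∂ℙ) := by
    filter_upwards [eventually_ge_atTop 2] with n hn2
    rw [← integral_add (Integrable.mono' hDint (hmeasA n) (hDboundA n)) (hbadA n hn2).1]
    apply integral_congr_ae
    apply ae_of_all
    intro ω
    by_cases hc : Real.exp (-4) ≤ sampleMean X n ω * sampleMean Y n ω
    · simp [hc]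
    · simp [hc]
  have hsplitB : ∀ᶠ n : ℕ in atTop,
      (∫ ω, (g ((X 0 ω * Y 0 ω) / (sampleMean X n ω * sampleMean Y n ω))) * (g (X 0 ω * Y 1 ω)) ∂ℙ)
        = (∫ ω, (if Real.exp (-4) ≤ sampleMean X n ω * sampleMean Y n ω then g ((X 0 ω * Y 0 ω) / (sampleMean X n ω * sampleMean Y n ω)) * g (X 0 ω * Y 1 ω) else 0) ∂ℙ)
          + (∫ ω, (if Real.exp (-4) ≤ sampleMean X n ω * sampleMean Y n ω then 0 else g ((X 0 ω * Y 0 ω) / (sampleMean X n ω * sampleMean Y n ω)) * g (X 0 ω * Y 1 ω)) ∂ℙ) := by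
    filter_upwards [eventually_ge_atTop 2] with n hn2
    rw [← integral_add (Integrable.mono' hDBint (hmeasB n) (hDboundB n)) (hbadB n hn2).1]
    apply integral_congr_ae
    apply ae_of_all
    intro ω
    by_cases hc : Real.exp (-4) ≤ sampleMean X n ω * sampleMean Y n ω
    · simp [hc]
    · simp [hc]
  have hA : Tendsto (fun n : ℕ =>
      ∫ ω, (g ((X 0 ω * Y 0 ω) / (sampleMean X n ω * sampleMean Y n ω))) * (g ((X 0 ω * Y 1 ω) / (sampleMean X n ω * sampleMean Y n ω))) ∂ℙ) atTop
      (𝓝 (∫ ω, (g (X 0 ω * Y 0 ω)) * (g (X 0 ω * Y 1 ω)) ∂ℙ)) := by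
    have h := hgoodA.add hbadA0
    rw [add_zero] at h
    apply Filter.Tendsto.congr' ?_ h
    filter_upwards [hsplitA] with n hn
    exact hn.symm
  have hB : Tendsto (fun n : ℕ =>
      ∫ ω, (g ((X 0 ω * Y 0 ω) / (sampleMean X n ω * sampleMean Y n ω))) * (g (X 0 ω * Y 1 ω)) ∂ℙ) atTop
      (𝓝 (∫ ω, (g (X 0 ω * Y 0 ω)) * (g (X 0 ω * Y 1 ω)) ∂ℙ)) := by
    have h := hgoodB.add hbadB0
    rw [add_zero] at h
    apply Filter.Tendsto.congr' ?_ h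
    filter_upwards [hsplitB] with n hn
    exact hn.symm
  -- the coefficient converges to 1
  have hcoef : Tendsto (fun n : ℕ => ((n:ℝ)-1)/(n:ℝ)) atTop (𝓝 1) := by
    have h1 : Tendsto (fun n : ℕ => 1 - 1/(n:ℝ)) atTop (𝓝 1) := by
      have h0 := tendsto_one_div_atTop_nhds_zero_nat (𝕜 := ℝ)
      have := tendsto_const_nhds (x := (1:ℝ)) (f := atTop (α := ℕ))
      simpa using this.sub h0
    apply Filter.Tendsto.congr' ?_ h1
    filter_upwards [eventually_ge_atTop 1] with n hn
    have hn0 : (n:ℝ) ≠ 0 := by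
      have : (0:ℝ) < (n:ℝ) := by exact_mod_cast hn
      exact this.ne'
    field_simp
  -- conclusion
  have hbracket := (hA.sub (hB.const_mul 2)).add_const
    (∫ ω, (g (X 0 ω * Y 0 ω)) * (g (X 0 ω * Y 1 ω)) ∂ℙ)
  rw [show (∫ ω, (g (X 0 ω * Y 0 ω)) * (g (X 0 ω * Y 1 ω)) ∂ℙ) - 2 * (∫ ω, (g (X 0 ω * Y 0 ω)) * (g (X 0 ω * Y 1 ω)) ∂ℙ)
      + (∫ ω, (g (X 0 ω * Y 0 ω)) * (g (X 0 ω * Y 1 ω)) ∂ℙ) = 0 by ring] at hbracket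
  have hfin := hcoef.mul hbracket
  rw [mul_zero] at hfin
  exact hfin
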